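/- Let Θ be an n×m phase matrix with m ≥ n. Then rank_phase(Θ) < n if and only if there exist scalars d_1,…,d_n, each either 0 or of modulus 1, not all zero, such that for every column index j the family (d_1·Θ_{1j}, …, d_n·Θ_{nj}) is not colopsided, i.e., 0 lies in the relative interior of the convex hull (in ℝ² ≅ ℂ) of these n points. -/

import Mathlib

/-- The phase rank of a complex matrix `Θ`: the minimum rank over all complex matrices
with nonzero entries whose entrywise phases agree with `Θ`. -/
noncomputable def phaseRank {n m : ℕ} (Θ : Matrix (Fin n) (Fin m) ℂ) : ℕ :=
  sInf {r | ∃ M : Matrix (Fin n) (Fin m) ℂ,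
    (∀ i j, M i j ≠ 0) ∧ (∀ i j, M i j / ((‖M i j‖ : ℝ) : ℂ) = Θ i j) ∧ M.rank = r}


section Aux
open Set Finset

lemma mem_intrinsicInterior_iff_ball {s : Set ℂ} {x : ℂ} :
    x ∈ intrinsicInterior ℝ s ↔
      x ∈ affineSpan ℝ s ∧ ∃ ε > 0, ∀ y ∈ affineSpan ℝ s, dist y x < ε → y ∈ s := by
  constructor
  · rintro ⟨⟨x, hx⟩, hint, rfl⟩
    refine ⟨hx, ?_⟩
    rw [mem_interior_iff_mem_nhds, Metric.mem_nhds_iff] at hint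
    obtain ⟨ε, hε, hball⟩ := hint
    refine ⟨ε, hε, fun y hy hdy => hball (show (⟨y, hy⟩ : affineSpan ℝ s) ∈ Metric.ball _ _ from ?_)⟩
    simpa [Metric.mem_ball, Subtype.dist_eq] using hdy
  · rintro ⟨hx, ε, hε, h⟩
    refine ⟨⟨x, hx⟩, ?_, rfl⟩
    rw [mem_interior_iff_mem_nhds, Metric.mem_nhds_iff]
    exact ⟨ε, hε, fun z hz => h z z.2 (by simpa [Metric.mem_ball, Subtype.dist_eq] using hz)⟩

lemma combo_mem_intrinsicInterior {s : Set ℂ} (hs : Convex ℝ s) {z y : ℂ}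
    (hz : z ∈ s) (hy : y ∈ intrinsicInterior ℝ s) {a b : ℝ} (ha : 0 ≤ a) (hb : 0 < b)
    (hab : a + b = 1) : a • z + b • y ∈ intrinsicInterior ℝ s := by
  rw [mem_intrinsicInterior_iff_ball] at hy ⊢
  obtain ⟨hyspan, ε, hε, hball⟩ := hy
  have hzspan : z ∈ affineSpan ℝ s := subset_affineSpan ℝ s hz
  set x := a • z + b • y with hxdef
  have hxspan : x ∈ affineSpan ℝ s := by
    have h1 := AffineSubspace.smul_vsub_vadd_mem (affineSpan ℝ s) b hyspan hzspan hzspan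
    have h2 : b • (y -ᵥ z) +ᵥ z = x := by
      simp only [vsub_eq_sub, vadd_eq_add, hxdef]
      rw [show a = 1 - b by linarith]
      module
    rwa [h2] at h1
  refine ⟨hxspan, b * ε, by positivity, fun y' hy' hdist => ?_⟩
  have hvspan : y + b⁻¹ • (y' - x) ∈ affineSpan ℝ s := by
    have := AffineSubspace.smul_vsub_vadd_mem (affineSpan ℝ s) b⁻¹ hy' hxspan hyspan
    simpa only [vsub_eq_sub, vadd_eq_add, add_comm] using this
  have hmem : y + b⁻¹ • (y' - x) ∈ s := by
    refine hball _ hvspan ?_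
    rw [dist_eq_norm]
    simp only [add_sub_cancel_left, norm_smul, norm_inv, Real.norm_eq_abs, abs_of_pos hb]
    rw [dist_eq_norm] at hdist
    calc b⁻¹ * ‖y' - x‖ < b⁻¹ * (b * ε) := by
          exact mul_lt_mul_of_pos_left hdist (by positivity)
      _ = ε := by field_simp
  have hrepr : y' = a • z + b • (y + b⁻¹ • (y' - x)) := by
    rw [smul_add, smul_smul, mul_inv_cancel₀ hb.ne', one_smul, hxdef]; ring_nf
  rw [hrepr]
  exact hs hz hmem ha hb.le hab

lemma exists_weights_of_mem_convexHull {k : ℕ} {p : Fin k → ℂ} {x : ℂ}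
    (hx : x ∈ convexHull ℝ (Set.range p)) :
    ∃ u : Fin k → ℝ, (∀ i, 0 ≤ u i) ∧ ∑ i, u i = 1 ∧ ∑ i, u i • p i = x := by
  rw [convexHull_range_eq_exists_affineCombination] at hx
  obtain ⟨s, w, hw0, hw1, hw⟩ := hx
  refine ⟨fun i => if i ∈ s then w i else 0, fun i => ?_, ?_, ?_⟩
  · dsimp only; split
    · exact hw0 _ ‹_›
    · exact le_refl 0
  · dsimp only; rw [Finset.sum_ite_mem, Finset.univ_inter, hw1]
  · dsimp only; rw [← hw, Finset.affineCombination_eq_linear_combination _ _ _ hw1]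
    rw [show (∑ i : Fin k, (if i ∈ s then w i else 0) • p i)
        = ∑ i : Fin k, (if i ∈ s then w i • p i else 0) from
      Finset.sum_congr rfl (fun i _ => by split <;> simp)]
    rw [Finset.sum_ite_mem, Finset.univ_inter]

lemma sum_mem_convexHull' {k : ℕ} {p : Fin k → ℂ} {u : Fin k → ℝ}
    (h0 : ∀ i, 0 ≤ u i) (h1 : ∑ i, u i = 1) :
    ∑ i, u i • p i ∈ convexHull ℝ (Set.range p) := by
  rw [← Finset.centerMass_eq_of_sum_1 _ _ h1]
  exact Finset.centerMass_mem_convexHull _ (fun i _ => h0 i) (by rw [h1]; norm_num)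
    (fun i _ => Set.mem_range_self i)

lemma pos_combo_mem_intrinsicInterior {k : ℕ} {p : Fin k → ℂ} {w : Fin k → ℝ} {x : ℂ}
    (h0 : ∀ i, 0 < w i) (h1 : ∑ i, w i = 1) (hx : ∑ i, w i • p i = x) :
    x ∈ intrinsicInterior ℝ (convexHull ℝ (Set.range p)) := by
  have hk : 0 < k := by
    rcases Nat.eq_zero_or_pos k with h | h
    · subst h; simp at h1
    · exact h
  have hne : (Finset.univ : Finset (Fin k)).Nonempty := Finset.univ_nonempty_iff.mpr ⟨⟨0, hk⟩⟩
  -- a point in the intrinsic interior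
  obtain ⟨y, hy⟩ := Set.Nonempty.intrinsicInterior (convex_convexHull ℝ _)
    ⟨p ⟨0, hk⟩, subset_convexHull ℝ _ (Set.mem_range_self _)⟩
  obtain ⟨μ, hμ0, hμ1, hμ⟩ := exists_weights_of_mem_convexHull (intrinsicInterior_subset hy)
  set c : ℝ := Finset.univ.inf' hne w with hc
  have hcpos : 0 < c := (Finset.lt_inf'_iff hne).mpr fun i _ => h0 i
  set δ : ℝ := c / 2 with hδ
  have hδpos : 0 < δ := by positivity
  have hμle : ∀ i, μ i ≤ 1 := by
    intro i
    rw [← hμ1]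
    exact Finset.single_le_sum (fun j _ => hμ0 j) (Finset.mem_univ i)
  set ν : Fin k → ℝ := fun i => (1 + δ) * w i - δ * μ i with hν
  have hνpos : ∀ i, 0 < ν i := by
    intro i
    have h2 : c ≤ w i := Finset.inf'_le _ (Finset.mem_univ i)
    have := hμle i
    simp only [hν]
    nlinarith [h0 i, hμ0 i]
  have hνsum : ∑ i, ν i = 1 := by
    simp only [hν]
    rw [Finset.sum_sub_distrib, ← Finset.mul_sum, ← Finset.mul_sum, h1, hμ1]
    ring
  have hz : ∑ i, ν i • p i ∈ convexHull ℝ (Set.range p) :=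
    sum_mem_convexHull' (fun i => (hνpos i).le) hνsum
  have hzx : ∑ i, ν i • p i = (1 + δ) • x - δ • y := by
    simp only [hν, sub_smul, mul_smul]
    rw [Finset.sum_sub_distrib, ← Finset.smul_sum, ← Finset.smul_sum, hx, hμ]
  have key := combo_mem_intrinsicInterior (convex_convexHull ℝ (Set.range p)) hz hy
    (a := (1 + δ)⁻¹) (b := δ / (1 + δ)) (by positivity) (by positivity)
    (by field_simp)
  have : (1 + δ)⁻¹ • (∑ i, ν i • p i) + (δ / (1 + δ)) • y = x := by
    rw [hzx]
    have h1δ : (1 : ℝ) + δ ≠ 0 := by positivity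
    rw [smul_sub, smul_smul, smul_smul, inv_mul_cancel₀ h1δ, one_smul, div_eq_mul_inv]
    module
  rwa [this] at key

lemma exists_pos_weights_of_mem_intrinsicInterior {k : ℕ} (hk : 0 < k) {p : Fin k → ℂ} {x : ℂ}
    (hx : x ∈ intrinsicInterior ℝ (convexHull ℝ (Set.range p))) :
    ∃ w : Fin k → ℝ, (∀ i, 0 < w i) ∧ ∑ i, w i = 1 ∧ ∑ i, w i • p i = x := by
  have hxhull : x ∈ convexHull ℝ (Set.range p) := intrinsicInterior_subset hx
  rw [mem_intrinsicInterior_iff_ball] at hx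
  obtain ⟨hxspan, ε, hε, hball⟩ := hx
  -- the centroid
  set b : ℂ := ∑ i, ((k : ℝ)⁻¹) • p i with hb
  have hbsum : ∑ _i : Fin k, ((k : ℝ)⁻¹) = (1 : ℝ) := by
    rw [Finset.sum_const, Finset.card_univ, Fintype.card_fin, nsmul_eq_mul]
    field_simp
  have hbhull : b ∈ convexHull ℝ (Set.range p) :=
    sum_mem_convexHull' (fun i => by positivity) hbsum
  have hbspan : b ∈ affineSpan ℝ (convexHull ℝ (Set.range p)) :=
    subset_affineSpan ℝ _ hbhull
  have hxspan' : x ∈ affineSpan ℝ (convexHull ℝ (Set.range p)) := hxspan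
  set t : ℝ := ε / (2 * (‖x - b‖ + 1)) with ht
  have htpos : 0 < t := by rw [ht]; positivity
  clear_value t
  set y : ℂ := x + t • (x - b) with hy
  have hyspan : y ∈ affineSpan ℝ (convexHull ℝ (Set.range p)) := by
    have h1 := AffineSubspace.smul_vsub_vadd_mem (affineSpan ℝ (convexHull ℝ (Set.range p)))
      t hxspan' hbspan hxspan'
    simpa only [vsub_eq_sub, vadd_eq_add, add_comm] using h1
  have hydist : dist y x < ε := by
    rw [dist_eq_norm, hy]
    simp only [add_sub_cancel_left, norm_smul, Real.norm_eq_abs, abs_of_pos htpos]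
    rw [ht, div_mul_eq_mul_div, div_lt_iff₀ (by positivity)]
    nlinarith [norm_nonneg (x - b)]
  have hyhull : y ∈ convexHull ℝ (Set.range p) := hball y hyspan hydist
  obtain ⟨u, hu0, hu1, hu⟩ := exists_weights_of_mem_convexHull hyhull
  have hkinv : (0:ℝ) < (k : ℝ)⁻¹ := by
    have : (0:ℝ) < (k:ℝ) := by exact_mod_cast hk
    positivity
  refine ⟨fun i => (u i + t * (k : ℝ)⁻¹) / (1 + t),
    fun i => div_pos (by nlinarith [hu0 i]) (by positivity), ?_, ?_⟩
  · rw [← Finset.sum_div, Finset.sum_add_distrib, hu1, ← Finset.mul_sum, hbsum]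
    field_simp
  · have expand : ∑ i, ((u i + t * (k : ℝ)⁻¹) / (1 + t)) • p i
        = (1 + t)⁻¹ • (∑ i, u i • p i + t • ∑ i, ((k : ℝ)⁻¹) • p i) := by
      have step : ∀ i : Fin k, ((u i + t * (k : ℝ)⁻¹) / (1 + t)) • p i
          = (1 + t)⁻¹ • (u i • p i) + (1 + t)⁻¹ • (t • ((k : ℝ)⁻¹ • p i)) := by
        intro i
        rw [div_eq_inv_mul, mul_smul, add_smul, mul_smul, smul_add]
      rw [Finset.sum_congr rfl fun i _ => step i, Finset.sum_add_distrib,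
        ← Finset.smul_sum, ← Finset.smul_sum, ← Finset.smul_sum, ← smul_add]
    rw [expand, hu, ← hb, hy]
    have h1t : (1 : ℝ) + t ≠ 0 := by positivity
    match_scalars <;> field_simp <;> ring

lemma rank_lt_of_vecMul_eq_zero {n m : ℕ} {M : Matrix (Fin n) (Fin m) ℂ} {c : Fin n → ℂ}
    (hc : c ≠ 0) (h : ∀ j, ∑ i, M i j * c i = 0) : M.rank < n := by
  rw [← Matrix.rank_transpose]
  have hkermem : c ∈ LinearMap.ker (M.transpose).mulVecLin := by
    rw [LinearMap.mem_ker]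
    funext j
    simpa [Matrix.mulVecLin_apply, Matrix.mulVec, Matrix.vecMul, dotProduct, mul_comm] using h j
  have hne : LinearMap.ker (M.transpose).mulVecLin ≠ ⊥ :=
    (Submodule.ne_bot_iff _).mpr ⟨c, hkermem, hc⟩
  have hrn := LinearMap.finrank_range_add_finrank_ker (M.transpose).mulVecLin
  rw [Module.finrank_fin_fun] at hrn
  have hpos : 0 < Module.finrank ℂ (LinearMap.ker (M.transpose).mulVecLin) := by
    rcases Nat.eq_zero_or_pos (Module.finrank ℂ (LinearMap.ker (M.transpose).mulVecLin)) with h0 | h0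
    · exact absurd (Submodule.finrank_eq_zero.mp h0) hne
    · exact h0
  rw [Matrix.rank]
  omega

lemma exists_vecMul_eq_zero_of_rank_lt {n m : ℕ} {M : Matrix (Fin n) (Fin m) ℂ}
    (h : M.rank < n) : ∃ c : Fin n → ℂ, c ≠ 0 ∧ ∀ j, ∑ i, M i j * c i = 0 := by
  rw [← Matrix.rank_transpose, Matrix.rank] at h
  have hrn := LinearMap.finrank_range_add_finrank_ker (M.transpose).mulVecLin
  rw [Module.finrank_fin_fun] at hrn
  have hne : LinearMap.ker (M.transpose).mulVecLin ≠ ⊥ := by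
    intro hbot
    rw [hbot, finrank_bot] at hrn
    omega
  obtain ⟨c, hcmem, hc0⟩ := (Submodule.ne_bot_iff _).mp hne
  refine ⟨c, hc0, fun j => ?_⟩
  rw [LinearMap.mem_ker] at hcmem
  have h2 := congrFun hcmem j
  simpa [Matrix.mulVecLin_apply, Matrix.mulVec, Matrix.vecMul, dotProduct, mul_comm] using h2

end Aux

/-- An `n × m` phase matrix with `m ≥ n` has nonmaximal phase rank iff there is a scaling
of its rows by scalars in `S¹ ∪ {0}`, not all zero, such that no column is colopsided,
i.e., `0` lies in the relative interior of the convex hull of each scaled column. -/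
theorem phaseRank_lt_iff_exists_scaling {n m : ℕ} (hnm : n ≤ m)
    (Θ : Matrix (Fin n) (Fin m) ℂ) (hphase : ∀ i j, ‖Θ i j‖ = 1) :
    phaseRank Θ < n ↔
      ∃ d : Fin n → ℂ, (∀ i, d i = 0 ∨ ‖d i‖ = 1) ∧ (∃ i, d i ≠ 0) ∧
        ∀ j, (0 : ℂ) ∈ intrinsicInterior ℝ
          (convexHull ℝ (Set.range fun i => d i * Θ i j)) := by
  have hΘ0 : ∀ i j, Θ i j ≠ 0 := by
    intro i j h0
    have := hphase i j
    rw [h0] at this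
    simp at this
  constructor
  · intro h
    have hSne : {r | ∃ M : Matrix (Fin n) (Fin m) ℂ,
        (∀ i j, M i j ≠ 0) ∧ (∀ i j, M i j / ((‖M i j‖ : ℝ) : ℂ) = Θ i j) ∧
        M.rank = r}.Nonempty :=
      ⟨Θ.rank, Θ, hΘ0, fun i j => by rw [hphase i j]; simp, rfl⟩
    have hmem := Nat.sInf_mem hSne
    obtain ⟨M, hM0, hMph, hMrank⟩ := hmem
    have hMlt : M.rank < n := by
      rw [hMrank]
      exact h
    obtain ⟨c, hc0, hcol⟩ := exists_vecMul_eq_zero_of_rank_lt hMlt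
    refine ⟨fun i => c i / ((‖c i‖ : ℝ) : ℂ), fun i => ?_, ?_, fun j => ?_⟩
    · by_cases hci : c i = 0
      · left; simp [hci]
      · right
        rw [norm_div, Complex.norm_real, Real.norm_eq_abs,
          _root_.abs_of_nonneg (norm_nonneg _),
          div_self (norm_ne_zero_iff.mpr hci)]
    · obtain ⟨i, hi⟩ := Function.ne_iff.mp hc0
      exact ⟨i, div_ne_zero hi (by simpa using hi)⟩
    · have hnne : (Finset.univ : Finset (Fin n)).Nonempty := by
        obtain ⟨i, _⟩ := Function.ne_iff.mp hc0
        exact ⟨i, Finset.mem_univ i⟩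
      set p : Fin n → ℂ := fun i => (c i / ((‖c i‖ : ℝ) : ℂ)) * Θ i j with hp
      set lam : Fin n → ℝ :=
        fun i => ‖c i‖ * ‖M i j‖ + (if c i = 0 then 1 else 0) with hlam
      have hlampos : ∀ i, 0 < lam i := by
        intro i
        by_cases hci : c i = 0
        · simp [hlam, hci]
        · have h1 : 0 < ‖c i‖ := norm_pos_iff.mpr hci
          have h2 : 0 < ‖M i j‖ := norm_pos_iff.mpr (hM0 i j)
          simp only [hlam, if_neg hci, add_zero]
          positivity
      have hterm : ∀ i, lam i • p i = M i j * c i := by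
        intro i
        by_cases hci : c i = 0
        · simp [hlam, hp, hci]
        · have h1 : ((‖c i‖ : ℝ) : ℂ) ≠ 0 := by
            simpa using hci
          have h2 : ((‖M i j‖ : ℝ) : ℂ) ≠ 0 := by
            simpa using hM0 i j
          have hΘij : Θ i j = M i j / ((‖M i j‖ : ℝ) : ℂ) := (hMph i j).symm
          simp only [hlam, hp, if_neg hci, add_zero, hΘij, Complex.real_smul]
          push_cast
          field_simp
      set T : ℝ := ∑ i, lam i with hT
      have hTpos : 0 < T := Finset.sum_pos (fun i _ => hlampos i) hnne
      refine pos_combo_mem_intrinsicInterior (w := fun i => lam i / T)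
        (fun i => div_pos (hlampos i) hTpos) ?_ ?_
      · rw [← Finset.sum_div, ← hT, div_self hTpos.ne']
      · have hsplit : ∑ i, (lam i / T) • p i = T⁻¹ • ∑ i, lam i • p i := by
          rw [Finset.smul_sum]
          exact Finset.sum_congr rfl fun i _ => by rw [div_eq_inv_mul, mul_smul]
        rw [hsplit,
          show ∑ i, lam i • p i = 0 from
            (Finset.sum_congr rfl fun i _ => hterm i).trans (hcol j),
          smul_zero]
  · rintro ⟨d, hd01, ⟨i0, hi0⟩, hcolint⟩
    have hn : 0 < n := i0.pos
    choose u hu0 hu1 husum using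
      fun j => exists_pos_weights_of_mem_intrinsicInterior hn (hcolint j)
    set M : Matrix (Fin n) (Fin m) ℂ :=
      Matrix.of (fun i j => (if d i = 0 then 1 else ((u j i : ℝ) : ℂ)) * Θ i j) with hMdef
    have hfact : ∀ i j, M i j = (((if d i = 0 then 1 else u j i : ℝ)) : ℂ) * Θ i j := by
      intro i j
      simp only [hMdef, Matrix.of_apply]
      split <;> simp
    have hfactpos : ∀ i j, 0 < (if d i = 0 then 1 else u j i : ℝ) := by
      intro i j
      split
      · exact one_pos
      · exact hu0 j i
    have hM0 : ∀ i j, M i j ≠ 0 := by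
      intro i j
      rw [hfact]
      exact mul_ne_zero (by exact_mod_cast (hfactpos i j).ne') (hΘ0 i j)
    have hMph : ∀ i j, M i j / ((‖M i j‖ : ℝ) : ℂ) = Θ i j := by
      intro i j
      rw [hfact, norm_mul, Complex.norm_real, hphase i j, mul_one, Real.norm_eq_abs,
        _root_.abs_of_pos (hfactpos i j), mul_comm, mul_div_assoc,
        div_self (by exact_mod_cast (hfactpos i j).ne' : ((if d i = 0 then 1 else u j i : ℝ) : ℂ) ≠ 0),
        mul_one]
    have hdep : ∀ j, ∑ i, M i j * d i = 0 := by
      intro j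
      have hterm : ∀ i, M i j * d i = u j i • (d i * Θ i j) := by
        intro i
        by_cases hdi : d i = 0
        · simp [hdi]
        · rw [hfact, if_neg hdi, Complex.real_smul]
          ring
      rw [Finset.sum_congr rfl fun i _ => hterm i]
      exact husum j
    have hd0 : (d : Fin n → ℂ) ≠ 0 := fun hz => hi0 (congrFun hz i0)
    have hrank : M.rank < n := rank_lt_of_vecMul_eq_zero hd0 hdep
    have hle : phaseRank Θ ≤ M.rank := Nat.sInf_le ⟨M, hM0, hMph, rfl⟩
    omega
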